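/- For all n ≥ 2, the total number of edges, summed over all vertical paths in all plane trees on n vertices, equals (2n-3)!/((n-2)!)^2. -/

import Mathlib

inductive PlaneTree : Type where
  | node : List PlaneTree → PlaneTree

namespace PlaneTree

mutual
def size : PlaneTree → ℕ
  | .node ts => 1 + sizeList ts
def sizeList : List PlaneTree → ℕ
  | [] => 0
  | t :: ts => size t + sizeList ts
end

mutual
def positions : PlaneTree → List (List ℕ)
  | .node ts => [] :: positionsList 0 ts
def positionsList : ℕ → List PlaneTree → List (List ℕ)
  | _, [] => []
  | i, t :: ts => (positions t).map (i :: ·) ++ positionsList (i+1) ts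
end

mutual
def leafPositions : PlaneTree → List (List ℕ)
  | .node [] => [[]]
  | .node (t :: ts) => leafList 0 (t :: ts)
def leafList : ℕ → List PlaneTree → List (List ℕ)
  | _, [] => []
  | i, t :: ts => (leafPositions t).map (i :: ·) ++ leafList (i+1) ts
end

def isPrefixB : List ℕ → List ℕ → Bool
  | [], _ => true
  | _ :: _, [] => false
  | a :: as, b :: bs => a == b && isPrefixB as bs

def lcpLen : List ℕ → List ℕ → ℕ
  | a :: as, b :: bs => if a = b then 1 + lcpLen as bs else 0
  | _, _ => 0

/-- number of edges on the path between two vertices given by positions -/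
def pathDist (p q : List ℕ) : ℕ :=
  (p.length - lcpLen p q) + (q.length - lcpLen p q)

/-- number of vertical paths (vertex, proper descendant) in a tree -/
def verticalPairs (T : PlaneTree) : ℕ :=
  ((positions T).map (fun q =>
    ((positions T).filter (fun p => p != q && isPrefixB p q)).length)).sum

/-- total number of edges over all vertical paths in a tree -/
def verticalEdges (T : PlaneTree) : ℕ :=
  ((positions T).map (fun q =>
    (((positions T).filter (fun p => p != q && isPrefixB p q)).map
      (fun p => q.length - p.length)).sum)).sum

/-- number of (unordered) paths between distinct vertices -/
def pathCount (T : PlaneTree) : ℕ := ((positions T).sublistsLen 2).length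

/-- Wiener index: sum of distances over unordered pairs of distinct vertices -/
def wiener (T : PlaneTree) : ℕ :=
  (((positions T).sublistsLen 2).map (fun l =>
    match l with
    | [p, q] => pathDist p q
    | _ => 0)).sum

end PlaneTree


namespace PlaneTree

mutual
def decEq : (a b : PlaneTree) → Decidable (a = b)
  | .node as, .node bs =>
    match decEqList as bs with
    | isTrue h => isTrue (by rw [h])
    | isFalse h => isFalse (by simp [h])
def decEqList : (as bs : List PlaneTree) → Decidable (as = bs)
  | [], [] => isTrue rfl
  | [], _ :: _ => isFalse (by simp)
  | _ :: _, [] => isFalse (by simp)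
  | a :: as, b :: bs =>
    match decEq a b, decEqList as bs with
    | isTrue h1, isTrue h2 => isTrue (by rw [h1, h2])
    | isFalse h1, _ => isFalse (by simp [h1])
    | _, isFalse h2 => isFalse (by simp [h2])
end

instance : DecidableEq PlaneTree := decEq

lemma size_node (ts : List PlaneTree) : size (node ts) = 1 + sizeList ts := by rw [size]

lemma sizeList_cons (t : PlaneTree) (ts : List PlaneTree) :
    sizeList (t :: ts) = size t + sizeList ts := by rw [sizeList]

lemma sizeList_nil : sizeList [] = 0 := by rw [sizeList]

lemma one_le_size (t : PlaneTree) : 1 ≤ size t := by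
  cases t with
  | node ts => rw [size]; omega

lemma size_le_of_mem {t : PlaneTree} {L : List PlaneTree} (h : t ∈ L) : size t ≤ sizeList L := by
  induction L with
  | nil => simp at h
  | cons s ss ih =>
    rw [sizeList_cons]
    rcases List.mem_cons.mp h with rfl | h'
    · omega
    · have := ih h'; omega

@[elab_as_elim] lemma tree_ind {motive : PlaneTree → Prop}
    (h : ∀ L, (∀ t ∈ L, motive t) → motive (node L)) : ∀ T, motive T := by
  have key : ∀ n T, size T ≤ n → motive T := by
    intro n
    induction n with
    | zero => intro T h0; have := one_le_size T; omega
    | succ n ih =>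
      intro T hT
      cases T with
      | node L =>
        refine h L (fun t ht => ih t ?_)
        have := size_le_of_mem ht
        rw [size_node] at hT
        omega
  exact fun T => key (size T) T le_rfl

lemma positions_node (L : List PlaneTree) :
    positions (node L) = [] :: positionsList 0 L := by rw [positions]

lemma positionsList_nil (i : ℕ) : positionsList i [] = [] := by rw [positionsList]

lemma positionsList_cons (i : ℕ) (t : PlaneTree) (ts : List PlaneTree) :
    positionsList i (t :: ts) = (positions t).map (i :: ·) ++ positionsList (i+1) ts := by
  rw [positionsList]

lemma positionsList_length (L : List PlaneTree) (hL : ∀ t ∈ L, (positions t).length = size t) :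
    ∀ i, (positionsList i L).length = sizeList L := by
  induction L with
  | nil => intro i; simp [positionsList_nil, sizeList_nil]
  | cons t ts ih =>
    intro i
    rw [positionsList_cons, List.length_append, List.length_map, sizeList_cons,
      hL t (by simp), ih (fun s hs => hL s (by simp [hs]))]

lemma positions_length : ∀ T : PlaneTree, (positions T).length = size T := by
  refine tree_ind (fun L ih => ?_)
  rw [positions_node, size_node, List.length_cons, positionsList_length L ih 0]
  omega

lemma positionsList_mem {i : ℕ} {L : List PlaneTree} {q : List ℕ}
    (h : q ∈ positionsList i L) : ∃ j q', i ≤ j ∧ q = j :: q' := by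
  induction L generalizing i with
  | nil => rw [positionsList_nil] at h; simp at h
  | cons t ts ih =>
    rw [positionsList_cons, List.mem_append] at h
    rcases h with h | h
    · rcases List.mem_map.mp h with ⟨q', _, rfl⟩
      exact ⟨i, q', le_rfl, rfl⟩
    · rcases ih h with ⟨j, q', hj, rfl⟩
      exact ⟨j, q', by omega, rfl⟩

/-- path-length statistic -/
def pathLen (T : PlaneTree) : ℕ := ((positions T).map List.length).sum

lemma sum_len_succ (P : List (List ℕ)) :
    (P.map (fun q => q.length + 1)).sum = (P.map List.length).sum + P.length := by
  induction P with
  | nil => simp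
  | cons q qs ih => simp only [List.map_cons, List.sum_cons, List.length_cons, ih]; omega

lemma positionsList_lenSum (L : List PlaneTree) :
    ∀ i, ((positionsList i L).map List.length).sum
      = (L.map (fun t => pathLen t + size t)).sum := by
  induction L with
  | nil => intro i; simp [positionsList_nil]
  | cons t ts ih =>
    intro i
    rw [positionsList_cons, List.map_append, List.sum_append, List.map_cons, List.sum_cons,
      ih (i+1), List.map_map]
    congr 1
    have h1 : (List.length ∘ (i :: ·) : List ℕ → ℕ) = fun q => q.length + 1 := by
      funext q; simp
    rw [h1, sum_len_succ, positions_length t]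
    rfl

lemma pathLen_node (L : List PlaneTree) :
    pathLen (node L) = (L.map (fun t => pathLen t + size t)).sum := by
  rw [pathLen, positions_node, List.map_cons, List.sum_cons, positionsList_lenSum L 0]
  simp

/-- the inner double sum defining verticalEdges, as a function of a position list -/
def V (P : List (List ℕ)) : ℕ :=
  (P.map (fun q => ((P.filter (fun p => p != q && isPrefixB p q)).map
    (fun p => q.length - p.length)).sum)).sum

lemma verticalEdges_eq_V (T : PlaneTree) : verticalEdges T = V (positions T) := rfl

lemma isPrefixB_cons (a b : ℕ) (as bs : List ℕ) :
    isPrefixB (a :: as) (b :: bs) = ((a == b) && isPrefixB as bs) := by rw [isPrefixB]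

lemma isPrefixB_nil_left (q : List ℕ) : isPrefixB [] q = true := by rw [isPrefixB]

lemma isPrefixB_cons_nil (a : ℕ) (as : List ℕ) : isPrefixB (a :: as) [] = false := by
  rw [isPrefixB]

lemma V_map_cons (c : ℕ) (P : List (List ℕ)) : V (P.map (c :: ·)) = V P := by
  unfold V
  rw [List.map_map]
  refine congrArg List.sum (List.map_congr_left ?_)
  intro q hq
  simp only [Function.comp_apply]
  rw [List.filter_map]
  have hpred : ∀ p ∈ P,
      ((fun p => p != (c :: q) && isPrefixB p (c :: q)) ∘ (c :: ·)) p
        = (p != q && isPrefixB p q) := by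
    intro p hp
    simp only [Function.comp_apply, isPrefixB_cons, bne, List.cons_beq_cons, BEq.refl,
      Bool.true_and, beq_self_eq_true]
  rw [List.filter_congr hpred, List.map_map]
  refine congrArg List.sum (List.map_congr_left ?_)
  intro p hp
  simp

lemma sum_map_add {α : Type*} (l : List α) (f g : α → ℕ) :
    (l.map (fun x => f x + g x)).sum = (l.map f).sum + (l.map g).sum := by
  induction l with
  | nil => simp
  | cons a l ih => simp only [List.map_cons, List.sum_cons, ih]; omega

lemma V_append (A B : List (List ℕ))
    (h : ∀ p ∈ A, ∀ q ∈ B, isPrefixB p q = false ∧ isPrefixB q p = false) :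
    V (A ++ B) = V A + V B := by
  unfold V
  rw [List.map_append, List.sum_append]
  congr 1
  · refine congrArg List.sum (List.map_congr_left ?_)
    intro q hq
    have hfB : B.filter (fun p => p != q && isPrefixB p q) = [] := by
      rw [List.filter_eq_nil_iff]
      intro p hp
      rw [(h q hq p hp).2]
      simp
    rw [List.filter_append, hfB, List.append_nil]
  · refine congrArg List.sum (List.map_congr_left ?_)
    intro q hq
    have hfA : A.filter (fun p => p != q && isPrefixB p q) = [] := by
      rw [List.filter_eq_nil_iff]
      intro p hp
      rw [(h p hp q hq).1]
      simp
    rw [List.filter_append, hfA, List.nil_append]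

lemma V_nil_cons (P : List (List ℕ)) (h : ∀ q ∈ P, q ≠ []) :
    V ([] :: P) = V P + (P.map List.length).sum := by
  unfold V
  rw [List.map_cons, List.sum_cons]
  have h0 : ([] :: P).filter (fun p => p != ([]:List ℕ) && isPrefixB p []) = [] := by
    rw [List.filter_eq_nil_iff]
    rintro p hp
    rcases List.mem_cons.mp hp with rfl | hp'
    · simp
    · cases p with
      | nil => simp
      | cons a as => rw [isPrefixB_cons_nil]; simp
  rw [h0]
  simp only [List.map_nil, List.sum_nil, zero_add]
  have key : ∀ q ∈ P, ((([] :: P).filter (fun p => p != q && isPrefixB p q)).map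
      (fun p => q.length - p.length)).sum
      = q.length + ((P.filter (fun p => p != q && isPrefixB p q)).map
      (fun p => q.length - p.length)).sum := by
    intro q hq
    rw [List.filter_cons]
    have hcond : ((([]:List ℕ) != q && isPrefixB [] q)) = true := by
      rw [isPrefixB_nil_left]
      cases q with
      | nil => exact absurd rfl (h [] hq)
      | cons a as => simp
    rw [hcond]
    simp
  rw [List.map_congr_left key, sum_map_add]
  omega

lemma V_positionsList (L : List PlaneTree) :
    ∀ i, V (positionsList i L) = (L.map verticalEdges).sum := by
  induction L with
  | nil => intro i; simp [positionsList_nil, V]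
  | cons t ts ih =>
    intro i
    rw [positionsList_cons]
    rw [V_append]
    · rw [V_map_cons, ih (i+1), List.map_cons, List.sum_cons, verticalEdges_eq_V]
    · rintro p hp q hq
      rcases List.mem_map.mp hp with ⟨p', _, rfl⟩
      rcases positionsList_mem hq with ⟨j, q', hj, rfl⟩
      constructor
      · rw [isPrefixB_cons]
        have hne : (i == j) = false := by simp; omega
        rw [hne]; simp
      · rw [isPrefixB_cons]
        have hne : (j == i) = false := by simp; omega
        rw [hne]; simp

lemma verticalEdges_node (L : List PlaneTree) :
    verticalEdges (node L) = (L.map verticalEdges).sum + pathLen (node L) := by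
  rw [verticalEdges_eq_V, positions_node, V_nil_cons _ (fun q hq => ?_)]
  · rw [V_positionsList L 0]
    congr 1
    rw [pathLen, positions_node, List.map_cons, List.sum_cons]
    simp
  · rcases positionsList_mem hq with ⟨j, q', _, rfl⟩
    simp

/-- all lists of plane trees with total size m -/
def lists : ℕ → Finset (List PlaneTree)
  | 0 => {[]}
  | (m+1) => (Finset.range (m+1)).attach.biUnion (fun j =>
      ((((lists j.1).image node) ×ˢ (lists (m - j.1))).image (fun p => p.1 :: p.2)))
decreasing_by
  · exact Finset.mem_range.mp j.2
  · omega

lemma mem_lists (m : ℕ) (L : List PlaneTree) : L ∈ lists m ↔ sizeList L = m := by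
  induction m using Nat.strong_induction_on generalizing L with
  | _ m ih =>
    cases m with
    | zero =>
      cases L with
      | nil => simp [lists, sizeList]
      | cons t ts =>
        simp only [lists, Finset.mem_singleton]
        constructor
        · intro h; exact absurd h (by simp)
        · intro h; rw [sizeList_cons] at h; have := one_le_size t; omega
    | succ m =>
      rw [lists]
      simp only [Finset.mem_biUnion, Finset.mem_attach, Finset.mem_image, Finset.mem_product,
        true_and, Subtype.exists, Finset.mem_range]
      constructor
      · rintro ⟨j, hj, ⟨⟨t, M⟩, ⟨⟨s, hs, rfl⟩, hM⟩, rfl⟩⟩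
        have h1 := (ih j hj s).mp hs
        have h2 := (ih (m - j) (by omega) M).mp hM
        rw [sizeList_cons, size_node]
        simp only at h1 h2 ⊢
        omega
      · rintro hL
        cases L with
        | nil => rw [sizeList] at hL; omega
        | cons t ts =>
          cases t with
          | node M =>
            rw [sizeList_cons, size_node] at hL
            refine ⟨sizeList M, by omega, ⟨(node M, ts), ⟨⟨M, (ih _ (by omega) M).mpr rfl, rfl⟩,
              (ih _ (by omega) ts).mpr (by omega)⟩, rfl⟩⟩

lemma sum_lists_succ (f : List PlaneTree → ℚ) (m : ℕ) :
    ∑ L ∈ lists (m+1), f L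
      = ∑ j ∈ Finset.range (m+1), ∑ M ∈ lists j, ∑ L ∈ lists (m - j), f (node M :: L) := by
  rw [lists, Finset.sum_biUnion]
  · rw [← Finset.sum_attach (Finset.range (m+1))
      (fun j => ∑ M ∈ lists j, ∑ L ∈ lists (m - j), f (node M :: L))]
    refine Finset.sum_congr rfl ?_
    rintro ⟨j, hj⟩ -
    rw [Finset.sum_image (by rintro ⟨a,b⟩ ha ⟨c,d⟩ hc h; simpa using h)]
    rw [Finset.sum_product]
    rw [Finset.sum_image (by intro a ha b hb h; simpa using h)]
  · rintro ⟨a, ha⟩ - ⟨c, hc⟩ - hne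
    simp only [Function.onFun]
    rw [Finset.disjoint_left]
    rintro x hx hx'
    simp only [Finset.mem_image, Finset.mem_product] at hx hx'
    obtain ⟨⟨t, M⟩, ⟨ht, hM⟩, rfl⟩ := hx
    obtain ⟨⟨t', M'⟩, ⟨ht', hM'⟩, h⟩ := hx'
    obtain ⟨rfl, rfl⟩ : t' = t ∧ M' = M := by simpa using h
    simp only [Finset.mem_image] at ht ht'
    obtain ⟨s, hs, rfl⟩ := ht
    obtain ⟨s', hs', hss⟩ := ht'
    obtain rfl : s' = s := by simpa using hss
    have h1 := (mem_lists _ _).mp hs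
    have h2 := (mem_lists _ _).mp hs'
    exact hne (Subtype.ext (h1 ▸ h2))

end PlaneTree
namespace PlaneTree

open PowerSeries

noncomputable def bq (m : ℕ) : ℚ := ((lists m).card : ℚ)

noncomputable def Astat (σ : PlaneTree → ℚ) (m : ℕ) : ℚ := ∑ L ∈ lists m, (L.map σ).sum

noncomputable def tstat (σ : PlaneTree → ℚ) : ℕ → ℚ
  | 0 => 0
  | (n+1) => ∑ M ∈ lists n, σ (node M)

lemma lists_zero : lists 0 = {[]} := by rw [lists]

lemma bq_zero : bq 0 = 1 := by rw [bq, lists_zero]; simp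

lemma bq_succ (m : ℕ) : bq (m+1) = ∑ j ∈ Finset.range (m+1), bq j * bq (m-j) := by
  have h : ((lists (m+1)).card : ℚ) = ∑ L ∈ lists (m+1), (1:ℚ) := by simp
  rw [bq, h, sum_lists_succ (fun _ => (1:ℚ)) m]
  refine Finset.sum_congr rfl (fun j hj => ?_)
  simp only [Finset.sum_const, nsmul_eq_mul, smul_eq_mul, mul_one, bq]

lemma Astat_zero (σ : PlaneTree → ℚ) : Astat σ 0 = 0 := by
  rw [Astat, lists_zero]; simp

lemma Astat_succ (σ : PlaneTree → ℚ) (m : ℕ) :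
    Astat σ (m+1) = ∑ j ∈ Finset.range (m+1),
      (tstat σ (j+1) * bq (m-j) + bq j * Astat σ (m-j)) := by
  rw [Astat, sum_lists_succ (fun L => (L.map σ).sum) m]
  refine Finset.sum_congr rfl (fun j hj => ?_)
  simp only [List.map_cons, List.sum_cons]
  rw [Finset.sum_comm]
  rw [show (∑ L ∈ lists (m-j), ∑ M ∈ lists j, (σ (node M) + (L.map σ).sum))
    = ∑ L ∈ lists (m-j), ((∑ M ∈ lists j, σ (node M)) + (lists j).card * (L.map σ).sum) from
    Finset.sum_congr rfl (fun L hL => by rw [Finset.sum_add_distrib, Finset.sum_const,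
      nsmul_eq_mul])]
  rw [Finset.sum_add_distrib, Finset.sum_const, nsmul_eq_mul, ← Finset.mul_sum]
  rw [tstat, bq, bq, Astat]
  ring

/-- series of list-level sums -/
noncomputable def Bs : ℚ⟦X⟧ := PowerSeries.mk bq
noncomputable def PLs : ℚ⟦X⟧ := PowerSeries.mk (Astat (fun t => (pathLen t : ℚ)))
noncomputable def Ps : ℚ⟦X⟧ := PowerSeries.mk (tstat (fun t => (pathLen t : ℚ)))
noncomputable def ELs : ℚ⟦X⟧ := PowerSeries.mk (Astat (fun t => (verticalEdges t : ℚ)))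
noncomputable def Es : ℚ⟦X⟧ := PowerSeries.mk (tstat (fun t => (verticalEdges t : ℚ)))
noncomputable def Ws : ℚ⟦X⟧ := PowerSeries.mk (fun m => (Nat.centralBinom m : ℚ))

lemma hB : Bs = 1 + X * Bs^2 := by
  ext n
  cases n with
  | zero =>
    simp [Bs, coeff_mk, bq_zero, PowerSeries.coeff_zero_eq_constantCoeff]
  | succ m =>
    rw [map_add, coeff_succ_X_mul, pow_two, coeff_mul,
      Finset.Nat.sum_antidiagonal_eq_sum_range_succ_mk]
    simp only [Bs, coeff_mk, coeff_one, Nat.succ_ne_zero, if_false, zero_add]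
    exact bq_succ m

lemma stat_series (σ : PlaneTree → ℚ) :
    PowerSeries.mk (Astat σ)
      = PowerSeries.mk (tstat σ) * Bs + X * (Bs * PowerSeries.mk (Astat σ)) := by
  ext n
  cases n with
  | zero =>
    simp only [PowerSeries.coeff_zero_eq_constantCoeff, map_add, map_mul, constantCoeff_X,
      zero_mul, add_zero, constantCoeff_mk]
    rw [Astat_zero]
    show (0:ℚ) = tstat σ 0 * bq 0
    rw [tstat]
    ring
  | succ m =>
    rw [map_add, coeff_succ_X_mul, coeff_mul, coeff_mul,
      Finset.Nat.sum_antidiagonal_eq_sum_range_succ_mk,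
      Finset.Nat.sum_antidiagonal_eq_sum_range_succ_mk]
    simp only [coeff_mk, Bs]
    rw [Finset.sum_range_succ', Astat_succ]
    have h0 : tstat σ 0 = 0 := rfl
    rw [h0, zero_mul, add_zero, ← Finset.sum_add_distrib]
    refine Finset.sum_congr rfl (fun j hj => ?_)
    have : m + 1 - (j + 1) = m - j := by omega
    rw [this]

lemma hPL : PLs = Ps * Bs + X * (Bs * PLs) := stat_series _
lemma hEL : ELs = Es * Bs + X * (Bs * ELs) := stat_series _

lemma tstat_pl_succ (m : ℕ) :
    tstat (fun t => (pathLen t : ℚ)) (m+1)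
      = Astat (fun t => (pathLen t : ℚ)) m + m * bq m := by
  rw [tstat, Astat]
  have key : ∀ M ∈ lists m, ((pathLen (node M) : ℚ))
      = (M.map (fun t => (pathLen t : ℚ))).sum + m := by
    intro M hM
    rw [pathLen_node]
    have hsz := (mem_lists m M).mp hM
    have : ∀ (N : List PlaneTree), (((N.map (fun t => pathLen t + size t)).sum : ℕ) : ℚ)
        = (N.map (fun t => (pathLen t : ℚ))).sum + (sizeList N : ℚ) := by
      intro N
      induction N with
      | nil => simp [sizeList_nil]
      | cons t ts ih => simp only [List.map_cons, List.sum_cons, sizeList_cons]; push_cast [ih]; ring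
    rw [this M, hsz]
  rw [Finset.sum_congr rfl key, Finset.sum_add_distrib, Finset.sum_const, nsmul_eq_mul, bq]
  ring

lemma cast_sum_map (f : PlaneTree → ℕ) : ∀ (N : List PlaneTree),
    (((N.map f).sum : ℕ) : ℚ) = (N.map (fun t => (f t : ℚ))).sum := by
  intro N
  induction N with
  | nil => simp
  | cons t ts ih => simp only [List.map_cons, List.sum_cons]; push_cast [ih]; ring

lemma tstat_ve_succ (m : ℕ) :
    tstat (fun t => (verticalEdges t : ℚ)) (m+1)
      = Astat (fun t => (verticalEdges t : ℚ)) m + tstat (fun t => (pathLen t : ℚ)) (m+1) := by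
  rw [tstat, tstat, Astat]
  rw [← Finset.sum_add_distrib]
  refine Finset.sum_congr rfl (fun M hM => ?_)
  rw [verticalEdges_node, Nat.cast_add, cast_sum_map verticalEdges M]

lemma hP : Ps = X * PLs + X^2 * (PowerSeries.derivativeFun Bs) := by
  ext n
  match n with
  | 0 =>
    simp only [map_add, map_mul, map_pow, PowerSeries.coeff_zero_eq_constantCoeff,
      constantCoeff_X, zero_mul, mul_zero, add_zero, Ps, constantCoeff_mk]
    rw [tstat]
    norm_num
  | 1 =>
    rw [map_add, coeff_succ_X_mul, PowerSeries.coeff_X_pow_mul', if_neg (by omega)]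
    simp only [Ps, PLs, coeff_mk, Astat_zero, add_zero]
    rw [tstat, lists_zero, Finset.sum_singleton]
    show ((pathLen (node []) : ℚ)) = 0
    rw [pathLen_node]
    simp
  | (m+2) =>
    rw [map_add, coeff_succ_X_mul, PowerSeries.coeff_X_pow_mul', if_pos (by omega)]
    simp only [Nat.add_sub_cancel, show ∀ f : ℚ⟦X⟧, PowerSeries.derivativeFun f = PowerSeries.derivative ℚ f from fun _ => rfl, PowerSeries.coeff_derivative]
    simp only [Ps, PLs, Bs, coeff_mk]
    rw [tstat_pl_succ (m+1)]
    push_cast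
    ring

lemma hE : Es = X * ELs + Ps := by
  ext n
  cases n with
  | zero =>
    simp only [map_add, PowerSeries.coeff_zero_eq_constantCoeff, map_mul, constantCoeff_X,
      zero_mul, zero_add, Es, Ps, constantCoeff_mk]
    rfl
  | succ m =>
    rw [map_add, coeff_succ_X_mul]
    simp only [Es, ELs, Ps, coeff_mk]
    exact tstat_ve_succ m

end PlaneTree
namespace PlaneTree

open PowerSeries

local notation "DD" => PowerSeries.derivative ℚ

lemma D_eq (f : ℚ⟦X⟧) : DD f = PowerSeries.derivativeFun f := rfl

lemma two_eq_C : (2 : ℚ⟦X⟧) = C 2 := (map_ofNat (C : ℚ →+* ℚ⟦X⟧) 2).symm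
lemma four_eq_C : (4 : ℚ⟦X⟧) = C 4 := (map_ofNat (C : ℚ →+* ℚ⟦X⟧) 4).symm

lemma D_two_mul (f : ℚ⟦X⟧) : DD (2 * f) = 2 * DD f := by
  rw [two_eq_C, Derivation.leibniz, derivative_C, smul_eq_mul, smul_eq_mul, mul_zero, add_zero]

lemma D_four_mul (f : ℚ⟦X⟧) : DD (4 * f) = 4 * DD f := by
  rw [four_eq_C, Derivation.leibniz, derivative_C, smul_eq_mul, smul_eq_mul, mul_zero, add_zero]

lemma hBu : Bs * (1 - X * Bs) = 1 := by linear_combination hB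

lemma hU2 : (1 - 2*X*Bs)^2 = 1 - 4*X := by linear_combination (-4*(X:ℚ⟦X⟧)) * hB

lemma hDBeq : DD Bs = Bs^2 + X * (2 * Bs * DD Bs) := by
  have hB' : Bs = 1 + X * (Bs * Bs) := by linear_combination hB
  have h := congrArg DD hB'
  rw [map_add, Derivation.map_one_eq_zero, zero_add, Derivation.leibniz, Derivation.leibniz,
    derivative_X] at h
  simp only [smul_eq_mul, mul_one] at h
  linear_combination h

lemma hdB : DD Bs * (1 - 2*X*Bs) = Bs^2 := by linear_combination hDBeq

lemma hDUeq : DD (1 - 2*X*Bs) = -(2 * (Bs + X * DD Bs)) := by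
  rw [map_sub, Derivation.map_one_eq_zero, mul_assoc, D_two_mul, Derivation.leibniz, derivative_X,
    smul_eq_mul, smul_eq_mul, mul_one]
  ring

lemma hUdU : (1 - 2*X*Bs) * DD (1 - 2*X*Bs) = -2 := by
  rw [hDUeq]
  linear_combination (-2*(X:ℚ⟦X⟧)) * hdB + (-2:ℚ⟦X⟧) * hBu

lemma hPU : Ps * (1 - 2*X*Bs) = X^2 * DD Bs * (1 - X*Bs) := by
  have hp := hP
  rw [← D_eq] at hp
  linear_combination (1 - X*Bs) * hp + (X:ℚ⟦X⟧) * hPL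

lemma hEU : Es * (1 - 2*X*Bs) = Ps * (1 - X*Bs) := by
  linear_combination (1 - X*Bs) * hE + (X:ℚ⟦X⟧) * hEL

lemma hEU3 : Es * (1 - 2*X*Bs)^3 = X^2 := by
  linear_combination (1 - 2*X*Bs)^2 * hEU + (1 - X*Bs) * (1 - 2*X*Bs) * hPU
    + X^2 * (1 - X*Bs)^2 * hdB + X^2 * (Bs * (1 - X*Bs) + 1) * hBu

lemma hWode : (1 - 4*X) * DD Ws = 2 * Ws := by
  ext n
  rw [sub_mul, one_mul, map_sub, two_eq_C, four_eq_C, mul_assoc, coeff_C_mul, coeff_C_mul]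
  cases n with
  | zero =>
    have h0 : (PowerSeries.coeff 0) (X * DD Ws) = 0 := by
      rw [PowerSeries.coeff_zero_eq_constantCoeff_apply, map_mul, constantCoeff_X, zero_mul]
    rw [h0, mul_zero, sub_zero, coeff_derivative]
    simp only [Ws, coeff_mk]
    have hc1 : Nat.centralBinom 1 = 2 := by decide
    have hc0 : Nat.centralBinom 0 = 1 := by decide
    rw [hc1, hc0]
    norm_num
  | succ n =>
    rw [coeff_succ_X_mul, coeff_derivative, coeff_derivative]
    simp only [Ws, coeff_mk]
    have key := Nat.succ_mul_centralBinom_succ (n+1)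
    have keyQ : ((n+2) : ℚ) * (Nat.centralBinom (n+2) : ℚ)
        = 2 * (2*(n+1)+1) * (Nat.centralBinom (n+1) : ℚ) := by
      exact_mod_cast key
    push_cast
    push_cast at keyQ
    nlinarith [keyQ]

lemma hWc : constantCoeff Ws = 1 := by
  rw [← PowerSeries.coeff_zero_eq_constantCoeff]
  simp [Ws, coeff_mk, Nat.centralBinom_zero]

lemma hW2 : Ws^2 * (1 - 4*X) = 1 := by
  refine PowerSeries.derivative.ext ?_ ?_
  · rw [Derivation.map_one_eq_zero, Derivation.leibniz]
    have hD4 : DD (1 - 4*X) = -4 := by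
      rw [map_sub, Derivation.map_one_eq_zero, D_four_mul, derivative_X]
      ring
    have hDW2 : DD (Ws^2) = 2 * Ws * DD Ws := by
      rw [pow_two, Derivation.leibniz]
      simp only [smul_eq_mul]
      ring
    rw [hD4, hDW2, smul_eq_mul, smul_eq_mul]
    linear_combination (2*Ws) * hWode
  · rw [map_mul, map_pow, hWc, map_sub, map_one, map_mul, constantCoeff_X]
    norm_num

lemma hWU : Ws * (1 - 2*X*Bs) = 1 := by
  have hsq : (Ws * (1 - 2*X*Bs))^2 = 1 := by
    linear_combination Ws^2 * hU2 + hW2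
  have hfac : (Ws * (1 - 2*X*Bs) - 1) * (Ws * (1 - 2*X*Bs) + 1) = 0 := by
    linear_combination hsq
  rcases mul_eq_zero.mp hfac with h | h
  · exact sub_eq_zero.mp h
  · exfalso
    have := congrArg (constantCoeff) h
    rw [map_add, map_mul, hWc, map_sub, map_one, map_mul, map_mul, constantCoeff_X] at this
    norm_num at this

lemma hDWU : DD Ws * (1 - 2*X*Bs) + Ws * DD (1 - 2*X*Bs) = 0 := by
  have h := congrArg DD hWU
  rw [Derivation.map_one_eq_zero, Derivation.leibniz, smul_eq_mul, smul_eq_mul] at h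
  linear_combination h

lemma hDW3 : DD Ws * (1 - 2*X*Bs)^3 = 2 := by
  linear_combination (1 - 2*X*Bs)^2 * hDWU - Ws * (1 - 2*X*Bs) * hUdU + 2 * hWU

lemma hdW : DD Ws = 2 * Ws^3 := by
  linear_combination Ws^3 * hDW3
    - (DD Ws) * ((Ws * (1 - 2*X*Bs))^2 + Ws * (1 - 2*X*Bs) + 1) * hWU

lemma hEsW : Es = X^2 * Ws^3 := by
  linear_combination Ws^3 * hEU3
    - Es * ((Ws * (1 - 2*X*Bs))^2 + Ws * (1 - 2*X*Bs) + 1) * hWU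

lemma e_closed (m : ℕ) :
    tstat (fun t => (verticalEdges t : ℚ)) (m+2)
      = (m+1) * (Nat.centralBinom (m+1) : ℚ) / 2 := by
  have h1 : tstat (fun t => (verticalEdges t : ℚ)) (m+2) = PowerSeries.coeff (m+2) Es := by
    simp [Es, coeff_mk]
  rw [h1, hEsW, PowerSeries.coeff_X_pow_mul', if_pos (by omega)]
  have h2 := congrArg (PowerSeries.coeff m) hdW
  rw [coeff_derivative, two_eq_C, coeff_C_mul] at h2
  have hcoef : (PowerSeries.coeff (m+1)) Ws = (Nat.centralBinom (m+1) : ℚ) := by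
    simp [Ws, coeff_mk]
  rw [hcoef] at h2
  have : m + 2 - 2 = m := by omega
  rw [this]
  have h3 : (PowerSeries.coeff m) (Ws^3) = (Nat.centralBinom (m+1) : ℚ) * (m+1) / 2 := by
    field_simp
    linarith [h2]
  rw [h3]
  ring

end PlaneTree
namespace PlaneTree

lemma tree_set_eq (n : ℕ) :
    {T : PlaneTree | T.size = n+1} = ↑((lists n).image node) := by
  ext T
  cases T with
  | node M =>
    simp only [Set.mem_setOf_eq, Finset.coe_image, Set.mem_image, Finset.mem_coe, mem_lists]
    constructor
    · intro h
      rw [size_node] at h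
      exact ⟨M, by omega, rfl⟩
    · rintro ⟨M', hM', hEq⟩
      obtain rfl : M' = M := by simpa using hEq
      rw [size_node]
      omega

lemma finsum_eq (n : ℕ) :
    (∑ᶠ T : {T : PlaneTree // T.size = n+1}, (T.1.verticalEdges : ℚ))
      = tstat (fun t => (verticalEdges t : ℚ)) (n+1) := by
  have hsub := finsum_subtype_eq_finsum_cond (f := fun t : PlaneTree => (t.verticalEdges : ℚ))
    (p := fun T : PlaneTree => T.size = n+1)
  rw [hsub]
  have hset : (∑ᶠ (i : PlaneTree) (_ : size i = n+1), ((verticalEdges i : ℚ)))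
      = ∑ᶠ i ∈ {T : PlaneTree | T.size = n+1}, ((verticalEdges i : ℚ)) := rfl
  rw [hset, tree_set_eq n, finsum_mem_coe_finset,
    Finset.sum_image (by intro a _ b _ h; simpa using h)]
  rw [tstat]

end PlaneTree

theorem total_vertical_path_edges_plane_trees (n : ℕ) (hn : 2 ≤ n) :
    (∑ᶠ T : {T : PlaneTree // T.size = n}, (T.1.verticalEdges : ℚ))
      = (Nat.factorial (2 * n - 3) : ℚ) / ((Nat.factorial (n - 2) : ℚ)) ^ 2 := by
  obtain ⟨m, rfl⟩ : ∃ m, n = m + 2 := ⟨n - 2, by omega⟩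
  have h1 := PlaneTree.finsum_eq (m+1)
  rw [h1, PlaneTree.e_closed m]
  have h2 : 2 * (m+2) - 3 = 2*m+1 := by omega
  have h3 : m + 2 - 2 = m := by omega
  rw [h2, h3]
  have hcb : (Nat.centralBinom (m+1) : ℚ) * ((m+1).factorial : ℚ) * ((m+1).factorial : ℚ)
      = ((2*(m+1)).factorial : ℚ) := by
    exact_mod_cast congrArg (Nat.cast : ℕ → ℚ)
      (by rw [Nat.centralBinom];
          have := Nat.choose_mul_factorial_mul_factorial
            (show m+1 ≤ 2*(m+1) by omega)
          rw [show 2*(m+1) - (m+1) = m+1 by omega] at this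
          exact this)
  have hf1 : ((2*(m+1)).factorial : ℚ) = (2*m+2) * ((2*m+1).factorial : ℚ) := by
    rw [show 2*(m+1) = (2*m+1) + 1 by omega, Nat.factorial_succ]
    push_cast
    ring
  have hf2 : (((m+1)).factorial : ℚ) = (m+1) * ((m).factorial : ℚ) := by
    rw [Nat.factorial_succ]
    push_cast
    ring
  have hmf : ((m).factorial : ℚ) ≠ 0 := Nat.cast_ne_zero.mpr (Nat.factorial_ne_zero m)
  rw [hf1, hf2] at hcb
  field_simp
  nlinarith [hcb]
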